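/- Let μ₀ be a probability measure on Banach space X satisfying an exponential moment bound E^{μ₀}[exp(β‖u‖_X)] < ∞ for all β ≤ α₁ + 2α₂. Suppose Φ: X × Y → ℝ satisfies Φ(u,y) ≥ M(r) − α₁‖u‖_X for ‖y‖_Y < r, and |Φ(u,y₁) − Φ(u,y₂)| ≤ exp(α₂‖u‖_X + C)‖y₁−y₂‖_Y for ‖y₁‖,‖y₂‖ < r. Then the normalizing constants Z(y) = ∫ exp(−Φ(u,y)) dμ₀ satisfy the Lipschitz bound |Z(y) − Z(y')| ≤ C(r)‖y−y'‖_Y for ‖y‖,‖y'‖ ≤ r. -/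

import Mathlib

open MeasureTheory Real

lemma exp_abs_sub_le (a b : ℝ) : |Real.exp a - Real.exp b| ≤ |a - b| * Real.exp (max a b) := by
  wlog h : a ≤ b generalizing a b
  · have := this b a (le_of_not_ge h)
    rwa [abs_sub_comm, abs_sub_comm a b, max_comm]
  have h1 : 1 - (b - a) ≤ Real.exp (-(b - a)) := by
    have := Real.add_one_le_exp (-(b - a)); linarith
  have h2 : Real.exp a = Real.exp b * Real.exp (-(b - a)) := by
    rw [← Real.exp_add]; ring_nf
  have hexp : Real.exp a ≤ Real.exp b := Real.exp_le_exp.mpr h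
  rw [abs_sub_comm, abs_of_nonneg (by linarith), abs_sub_comm a b,
    abs_of_nonneg (by linarith : (0:ℝ) ≤ b - a), max_eq_right h]
  nlinarith [Real.exp_pos b]

/-- inequality (normineq) in Theorem 3.3: local Lipschitz continuity of
the evidence Z(y) = ∫ exp(−Φ(u,y)) dμ₀ in the data y, under the lower bound
Φ(u,y) ≥ M(r) − α₁‖u‖ (for ‖y‖ < r), the Lipschitz-in-y bound with constant
exp(α₂‖u‖ + C), and the exponential moment bound on μ₀ for all β ≤ α₁ + 2α₂. -/
theorem evidence_lipschitz
    {X Y : Type*} [NormedAddCommGroup X] [NormedAddCommGroup Y] [MeasurableSpace X]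
    (μ0 : Measure X) [IsProbabilityMeasure μ0]
    (α₁ α₂ C : ℝ) (hα₁ : 0 ≤ α₁) (hα₂ : 0 ≤ α₂)
    (hexp : ∀ β : ℝ, β ≤ α₁ + 2 * α₂ → Integrable (fun u => Real.exp (β * ‖u‖)) μ0)
    (Φ : X → Y → ℝ) (hΦmeas : ∀ y, Measurable fun u => Φ u y)
    (M : ℝ → ℝ) (hlow : ∀ r : ℝ, ∀ u y, ‖y‖ < r → M r - α₁ * ‖u‖ ≤ Φ u y)
    (hlip : ∀ r : ℝ, ∀ u y₁ y₂, ‖y₁‖ < r → ‖y₂‖ < r →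
      |Φ u y₁ - Φ u y₂| ≤ Real.exp (α₂ * ‖u‖ + C) * ‖y₁ - y₂‖) :
    ∀ r : ℝ, 0 < r → ∃ Cr : ℝ, ∀ y y' : Y, ‖y‖ ≤ r → ‖y'‖ ≤ r →
      |(∫ u, Real.exp (-Φ u y) ∂μ0) - ∫ u, Real.exp (-Φ u y') ∂μ0|
        ≤ Cr * ‖y - y'‖ := by
  intro r hr
  set s : ℝ := r + 1 with hs
  have hg : Integrable (fun u => Real.exp ((α₁ + α₂) * ‖u‖)) μ0 := hexp _ (by linarith)
  refine ⟨Real.exp (C - M s) * ∫ u, Real.exp ((α₁ + α₂) * ‖u‖) ∂μ0, ?_⟩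
  intro y y' hy hy'
  have hys : ‖y‖ < s := by simp only [hs]; linarith
  have hy's : ‖y'‖ < s := by simp only [hs]; linarith
  -- integrability of the integrands
  have hint : ∀ z : Y, ‖z‖ < s → Integrable (fun u => Real.exp (-Φ u z)) μ0 := by
    intro z hz
    refine ((hexp α₁ (by linarith)).const_mul (Real.exp (-M s))).mono
      ((hΦmeas z).neg.exp.aestronglyMeasurable) ?_
    filter_upwards with u
    rw [Real.norm_eq_abs, abs_of_nonneg (Real.exp_pos _).le, Real.norm_eq_abs,
      abs_of_nonneg (by positivity), ← Real.exp_add]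
    have := hlow s u z hz
    exact Real.exp_le_exp.mpr (by linarith)
  -- pointwise bound
  have hpt : ∀ u, |Real.exp (-Φ u y) - Real.exp (-Φ u y')| ≤
      Real.exp (C - M s) * Real.exp ((α₁ + α₂) * ‖u‖) * ‖y - y'‖ := by
    intro u
    calc |Real.exp (-Φ u y) - Real.exp (-Φ u y')|
        ≤ |(-Φ u y) - (-Φ u y')| * Real.exp (max (-Φ u y) (-Φ u y')) :=
          exp_abs_sub_le _ _
      _ ≤ (Real.exp (α₂ * ‖u‖ + C) * ‖y - y'‖) * Real.exp (α₁ * ‖u‖ - M s) := by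
          apply mul_le_mul
          · have : |(-Φ u y) - (-Φ u y')| = |Φ u y - Φ u y'| := by
              rw [abs_sub_comm]; ring_nf
            rw [this]; exact hlip s u y y' hys hy's
          · apply Real.exp_le_exp.mpr
            apply max_le
            · have := hlow s u y hys; linarith
            · have := hlow s u y' hy's; linarith
          · exact (Real.exp_pos _).le
          · positivity
      _ = Real.exp (C - M s) * Real.exp ((α₁ + α₂) * ‖u‖) * ‖y - y'‖ := by
          rw [mul_right_comm, ← Real.exp_add, ← Real.exp_add]; ring_nf
  have hfy := hint y hys
  have hfy' := hint y' hy's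
  have hbound : Integrable
      (fun u => Real.exp (C - M s) * Real.exp ((α₁ + α₂) * ‖u‖) * ‖y - y'‖) μ0 :=
    (hg.const_mul _).mul_const _
  calc |(∫ u, Real.exp (-Φ u y) ∂μ0) - ∫ u, Real.exp (-Φ u y') ∂μ0|
      = |∫ u, (Real.exp (-Φ u y) - Real.exp (-Φ u y')) ∂μ0| := by
        rw [integral_sub hfy hfy']
    _ ≤ ∫ u, |Real.exp (-Φ u y) - Real.exp (-Φ u y')| ∂μ0 := by
        simpa [Real.norm_eq_abs] using
          norm_integral_le_integral_norm (fun u => Real.exp (-Φ u y) - Real.exp (-Φ u y'))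
    _ ≤ ∫ u, Real.exp (C - M s) * Real.exp ((α₁ + α₂) * ‖u‖) * ‖y - y'‖ ∂μ0 :=
        integral_mono (hfy.sub hfy').abs hbound hpt
    _ = Real.exp (C - M s) * (∫ u, Real.exp ((α₁ + α₂) * ‖u‖) ∂μ0) * ‖y - y'‖ := by
        rw [integral_mul_const, integral_const_mul]
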